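/- The closure of the set of all complex zeros of reliability polynomials of connected multigraphs contains the closed unit disc {q ∈ ℂ : |q| ≤ 1}. -/

import Mathlib

structure Multigraph where
  V : Type
  E : Type
  [fV : Fintype V]
  [dV : DecidableEq V]
  [fE : Fintype E]
  [dE : DecidableEq E]
  ends : E → Sym2 V

attribute [instance] Multigraph.fV Multigraph.dV Multigraph.fE Multigraph.dE

/-- The edges in `S` induce a connected spanning subgraph. -/
def Multigraph.ConnectedOn (G : Multigraph) (S : Finset G.E) : Prop :=
  ∀ v w : G.V, Relation.ReflTransGen (fun a b => ∃ e ∈ S, G.ends e = s(a, b)) v w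

def Multigraph.Connected (G : Multigraph) : Prop :=
  G.ConnectedOn Finset.univ

open Polynomial in
open scoped Classical in
/-- The reliability polynomial of a multigraph. -/
noncomputable def Multigraph.rel (G : Multigraph) : Polynomial ℂ :=
  ∑ S : Finset G.E,
    if G.ConnectedOn S then X ^ (Fintype.card G.E - S.card) * (1 - X) ^ S.card else 0

open Finset

/-- the cycle on `n+3` vertices with each edge replaced by `k+1` parallel edges -/
def cyc (n k : ℕ) : Multigraph where
  V := ZMod (n + 3)
  E := ZMod (n + 3) × Fin (k + 1)
  ends e := s(e.1, e.1 + 1)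

section conn

variable {n k : ℕ}

abbrev cr (S : Finset (ZMod (n+3) × Fin (k+1))) (a b : ZMod (n+3)) : Prop :=
  ∃ e ∈ S, s(e.1, e.1 + 1) = s(a, b)

lemma cr_symm (S : Finset (ZMod (n+3) × Fin (k+1))) : Symmetric (cr S) := by
  rintro a b ⟨e, he, h⟩
  exact ⟨e, he, h.trans (Sym2.eq_swap)⟩

lemma reach (S : Finset (ZMod (n+3) × Fin (k+1))) (a0 : ZMod (n+3))
    (H : ∀ a, a ≠ a0 → ∃ j, (a, j) ∈ S) :
    ∀ m : ℕ, m + 1 ≤ n + 3 →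
      Relation.ReflTransGen (cr S) (a0 + 1) (a0 + 1 + (m : ZMod (n+3))) := by
  intro m
  induction m with
  | zero => intro _; simpa using Relation.ReflTransGen.refl
  | succ m ih =>
    intro hm
    have h1 : Relation.ReflTransGen (cr S) (a0 + 1) (a0 + 1 + (m : ZMod (n+3))) :=
      ih (by omega)
    set c : ZMod (n+3) := a0 + 1 + (m : ZMod (n+3)) with hc
    have hcne : c ≠ a0 := by
      intro h
      have : ((m + 1 : ℕ) : ZMod (n+3)) = 0 := by
        push_cast
        linear_combination h - hc
      rw [ZMod.natCast_eq_zero_iff] at this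
      have := Nat.le_of_dvd (by omega) this
      omega
    obtain ⟨j, hj⟩ := H c hcne
    have step : cr S c (c + 1) := ⟨(c, j), hj, rfl⟩
    have : a0 + 1 + ((m + 1 : ℕ) : ZMod (n+3)) = c + 1 := by push_cast; ring
    rw [this]
    exact h1.tail step

lemma reach_all (S : Finset (ZMod (n+3) × Fin (k+1))) (a0 : ZMod (n+3))
    (H : ∀ a, a ≠ a0 → ∃ j, (a, j) ∈ S) (v : ZMod (n+3)) :
    Relation.ReflTransGen (cr S) (a0 + 1) v := by
  have h1 := reach S a0 H (v - (a0 + 1)).val (by have := ZMod.val_lt (v - (a0+1)); omega)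
  rwa [ZMod.natCast_rightInverse _, add_sub_cancel] at h1

end conn

section disc

variable {n k : ℕ}

/-- potential separating the two arcs -/
def pot (i j v : ZMod (n+3)) : Prop := (v - (i+1)).val < (j - i).val

lemma val_add_one {z : ZMod (n+3)} (hz : z ≠ -1) : (z + 1).val = z.val + 1 := by
  have hv : z.val ≠ n + 2 := by
    intro h
    apply hz
    apply ZMod.val_injective
    rw [h, ZMod.val_neg_one]
  have hlt : z.val + 1 < n + 3 := by have := ZMod.val_lt z; omega
  have : z + 1 = ((z.val + 1 : ℕ) : ZMod (n+3)) := by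
    push_cast
    rw [ZMod.natCast_rightInverse z]
  rw [this, ZMod.val_cast_of_lt hlt]

lemma pot_step {i j c : ZMod (n+3)} (hij : i ≠ j) (hci : c ≠ i) (hcj : c ≠ j) :
    (pot i j c ↔ pot i j (c + 1)) := by
  set z := c - (i + 1) with hz
  have hd1 : 1 ≤ (j - i).val := by
    have : j - i ≠ 0 := sub_ne_zero.mpr (Ne.symm hij)
    have : (j - i).val ≠ 0 := fun h => this (by
      have := ZMod.natCast_rightInverse (j - i)
      rw [h] at this; simpa using this.symm)
    omega
  have hzne : z ≠ -1 := by
    intro h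
    apply hci
    have : c = z + (i + 1) := by rw [hz]; ring
    rw [this, h]; ring
  have hplus : (c + 1 - (i+1)) = z + 1 := by rw [hz]; ring
  have hval : (c + 1 - (i+1)).val = z.val + 1 := by rw [hplus, val_add_one hzne]
  have hxd : z.val ≠ (j - i).val - 1 := by
    intro h
    apply hcj
    have h2 : z = (j - i) - 1 := by
      apply ZMod.val_injective
      rw [h]
      have : ((j - i) - 1) = (((j-i).val - 1 : ℕ) : ZMod (n+3)) := by
        have hc : ((j - i).val : ZMod (n+3)) = j - i := ZMod.natCast_rightInverse _
        rw [Nat.cast_sub hd1, hc]; simp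
      rw [this, ZMod.val_cast_of_lt (by have := ZMod.val_lt (j - i); omega)]
    have : c = z + (i + 1) := by rw [hz]; ring
    rw [this, h2]; ring
  unfold pot
  rw [← hz, hval]
  omega

lemma not_connected {S : Finset (ZMod (n+3) × Fin (k+1))} {i j : ZMod (n+3)}
    (hij : i ≠ j) (hi : ∀ jj, (i, jj) ∉ S) (hj : ∀ jj, (j, jj) ∉ S) :
    ¬ Relation.ReflTransGen (cr S) (i + 1) i := by
  intro h
  have hpres : ∀ a b, cr S a b → (pot i j a ↔ pot i j b) := by
    rintro a b ⟨⟨c, jj⟩, hmem, hends⟩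
    have hci : c ≠ i := fun h => hi jj (h ▸ hmem)
    have hcj : c ≠ j := fun h => hj jj (h ▸ hmem)
    have hstep := pot_step hij hci hcj
    rcases Sym2.eq_iff.mp hends with ⟨h1, h2⟩ | ⟨h1, h2⟩
    · rw [← h1, ← h2]; exact hstep
    · rw [← h1, ← h2]; exact hstep.symm
  have hinv0 : ∀ v w, Relation.ReflTransGen (cr S) v w → (pot i j v ↔ pot i j w) := by
    intro v w hvw
    induction hvw with
    | refl => rfl
    | tail _ hs ih => exact ih.trans (hpres _ _ hs)
  have hinv : pot i j (i+1) ↔ pot i j i := hinv0 _ _ h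
  have hd1 : 1 ≤ (j - i).val := by
    have h0 : j - i ≠ 0 := sub_ne_zero.mpr (Ne.symm hij)
    have : (j - i).val ≠ 0 := fun h => h0 (by
      have := ZMod.natCast_rightInverse (j - i)
      rw [h] at this; simpa using this.symm)
    omega
  have hp1 : pot i j (i+1) := by unfold pot; rw [sub_self, ZMod.val_zero]; omega
  have hpi : ¬ pot i j i := by
    unfold pot
    have : (i - (i+1)) = (-1 : ZMod (n+3)) := by ring
    rw [this, ZMod.val_neg_one]
    have := ZMod.val_lt (j - i)
    omega
  exact hpi (hinv.mp hp1)

end disc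

section conn2

variable {n k : ℕ}

lemma connectedOn_iff (S : Finset (ZMod (n+3) × Fin (k+1))) :
    (cyc n k).ConnectedOn S ↔
      ((univ : Finset (ZMod (n+3))).filter (fun a => ∀ j, (a, j) ∉ S)).card ≤ 1 := by
  constructor
  · intro hconn
    by_contra hcard
    rw [not_le] at hcard
    obtain ⟨i, hi, j, hj, hij⟩ := Finset.one_lt_card.mp hcard
    simp only [Finset.mem_filter, Finset.mem_univ, true_and] at hi hj
    exact not_connected hij hi hj (hconn (i+1) i)
  · intro hcard
    rw [Finset.card_le_one] at hcard
    have H : ∃ a0, ∀ a, a ≠ a0 → ∃ jj, (a, jj) ∈ S := by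
      by_cases hex : ∃ a0 : ZMod (n+3), ∀ jj, (a0, jj) ∉ S
      · obtain ⟨a0, ha0⟩ := hex
        refine ⟨a0, fun a ha => ?_⟩
        by_contra hno
        push_neg at hno
        exact ha (hcard a (by simp [hno]) a0 (by simp [ha0]))
      · push_neg at hex
        exact ⟨0, fun a _ => hex a⟩
    obtain ⟨a0, ha0⟩ := H
    intro v w
    haveI : Std.Symm (cr S) := ⟨cr_symm S⟩
    have hsym := fun {a b : ZMod (n+3)} (h : Relation.ReflTransGen (cr S) a b) =>
      (Relation.ReflTransGen.symmetric (r := cr S)).symm a b h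
    exact (hsym (reach_all S a0 ha0 v)).trans (reach_all S a0 ha0 w)

lemma cyc_connected (n k : ℕ) : (cyc n k).Connected := by
  rw [Multigraph.Connected]
  rw [show (univ : Finset (cyc n k).E) = (univ : Finset (ZMod (n+3) × Fin (k+1))) from rfl]
  rw [connectedOn_iff]
  have : ((Finset.univ : Finset (ZMod (n+3))).filter (fun a => ∀ j, (a, j) ∉ (Finset.univ : Finset (ZMod (n+3) × Fin (k+1))))) = ∅ := by
    ext a; simp
  rw [this]
  simp

end conn2


section fe
variable {α β : Type} [Fintype α] [Fintype β] [DecidableEq α] [DecidableEq β]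

def fe : Finset (α × β) ≃ (α → Finset β) where
  toFun S a := univ.filter (fun b => (a, b) ∈ S)
  invFun f := univ.filter (fun p => p.2 ∈ f p.1)
  left_inv S := by ext ⟨a, b⟩; simp
  right_inv f := by funext a; ext b; simp

lemma fe_symm_mem (f : α → Finset β) (a : α) (b : β) :
    (a, b) ∈ fe.symm f ↔ b ∈ f a := by simp [fe]

lemma fe_symm_card (f : α → Finset β) : (fe.symm f).card = ∑ a, (f a).card := by
  show (univ.filter (fun p : α × β => p.2 ∈ f p.1)).card = _
  rw [Finset.card_filter, Fintype.sum_prod_type]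
  refine Finset.sum_congr rfl fun a _ => ?_
  rw [← Finset.card_filter]
  congr 1
  exact Finset.filter_univ_mem (f a)

end fe

section binom
variable {k : ℕ} (q : ℂ)

/-- weight of one bundle -/
def wt (q : ℂ) (k : ℕ) (s : Finset (Fin (k+1))) : ℂ := q ^ (k + 1 - s.card) * (1 - q) ^ s.card

lemma sum_wt_univ : ∑ s : Finset (Fin (k+1)), wt q k s = 1 := by
  have h := Finset.prod_add (fun _ : Fin (k+1) => (1 - q)) (fun _ => q) univ
  rw [Finset.powerset_univ] at h
  simp only [Finset.prod_const, Finset.card_univ, Fintype.card_fin] at h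
  have h2 : ((1 - q) + q : ℂ) = 1 := by ring
  rw [h2, one_pow] at h
  rw [show (1 : ℂ) = ∑ t : Finset (Fin (k+1)), (1-q)^t.card * q^((univ \ t).card) from h]
  refine Finset.sum_congr rfl fun s _ => ?_
  rw [Finset.card_sdiff_of_subset (Finset.subset_univ s), Finset.card_univ, Fintype.card_fin, wt]
  ring

lemma wt_empty : wt q k ∅ = q ^ (k+1) := by simp [wt]

lemma sum_wt_erase : ∑ s ∈ (univ : Finset (Finset (Fin (k+1)))).erase ∅, wt q k s
    = 1 - q ^ (k+1) := by
  have h := Finset.add_sum_erase univ (wt q k) (Finset.mem_univ ∅)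
  rw [sum_wt_univ] at h
  rw [← h, wt_empty]
  ring

end binom


section releval
variable (n k : ℕ) (q : ℂ)

abbrev emptiesOf (f : ZMod (n+3) → Finset (Fin (k+1))) : Finset (ZMod (n+3)) :=
  univ.filter (fun a => f a = ∅)

lemma fiber_eq (T : Finset (ZMod (n+3))) :
    (univ : Finset (ZMod (n+3) → Finset (Fin (k+1)))).filter (fun f => emptiesOf n k f = T)
      = Fintype.piFinset (fun a => if a ∈ T then ({∅} : Finset (Finset (Fin (k+1)))) else univ.erase ∅) := by
  ext f
  simp only [Finset.mem_filter, Finset.mem_univ, true_and, Fintype.mem_piFinset]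
  constructor
  · intro h a
    have hmem : a ∈ T ↔ f a = ∅ := by rw [← h]; simp [emptiesOf]
    by_cases ha : a ∈ T
    · simp [ha, hmem.mp ha]
    · simp only [ha, if_false, Finset.mem_erase, Finset.mem_univ, and_true]
      exact fun hfa => ha (hmem.mpr hfa)
  · intro h
    ext a
    simp only [emptiesOf, Finset.mem_filter, Finset.mem_univ, true_and]
    have := h a
    by_cases ha : a ∈ T
    · simp only [ha, if_true, Finset.mem_singleton] at this
      simp [ha, this]
    · simp only [ha, if_false, Finset.mem_erase] at this
      simp [ha, this.1]

lemma bundleSum (T : Finset (ZMod (n+3))) :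
    ∑ f ∈ (univ : Finset (ZMod (n+3) → Finset (Fin (k+1)))).filter (fun f => emptiesOf n k f = T),
      ∏ a, wt q k (f a)
    = (q^(k+1))^T.card * (1 - q^(k+1))^((n+3) - T.card) := by
  rw [fiber_eq, ← Finset.prod_univ_sum]
  have step : ∀ a : ZMod (n+3),
      (∑ s ∈ (if a ∈ T then ({∅} : Finset (Finset (Fin (k+1)))) else univ.erase ∅), wt q k s)
        = if a ∈ T then q^(k+1) else 1 - q^(k+1) := by
    intro a
    by_cases ha : a ∈ T
    · simp [ha, wt_empty]
    · simp only [ha, if_false]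
      exact sum_wt_erase q
  rw [Finset.prod_congr rfl (fun a _ => step a)]
  rw [Finset.prod_ite (fun _ => q^(k+1)) (fun _ => 1 - q^(k+1))]
  have h1 : (univ.filter (fun a : ZMod (n+3) => a ∈ T)) = T := Finset.filter_univ_mem T
  have h2 : (univ.filter (fun a : ZMod (n+3) => a ∉ T)) = Tᶜ := by ext a; simp
  rw [h1, h2, Finset.prod_const, Finset.prod_const, Finset.card_compl]
  congr 2
  simp [ZMod.card]

lemma cyc_rel_eval : ((cyc n k).rel).eval q =
    (1 - q^(k+1))^(n+3) + (n+3 : ℂ) * (q^(k+1) * (1 - q^(k+1))^(n+2)) := by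
  classical
  rw [Multigraph.rel, Polynomial.eval_finset_sum]
  simp only [apply_ite (Polynomial.eval q), Polynomial.eval_mul, Polynomial.eval_pow,
    Polynomial.eval_X, Polynomial.eval_sub, Polynomial.eval_one, Polynomial.eval_zero]
  have hstep : ∀ S : Finset ((cyc n k).E),
      (if (cyc n k).ConnectedOn S then q ^ (Fintype.card (cyc n k).E - S.card) * (1 - q) ^ S.card else 0)
      = (fun S : Finset (ZMod (n+3) × Fin (k+1)) =>
          if ((univ : Finset (ZMod (n+3))).filter (fun a => ∀ j, (a, j) ∉ S)).card ≤ 1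
          then q ^ ((n+3) * (k+1) - S.card) * (1 - q) ^ S.card else 0) S := by
    intro S
    have hc : Fintype.card (cyc n k).E = (n+3) * (k+1) := by
      show Fintype.card (ZMod (n+3) × Fin (k+1)) = _
      simp [ZMod.card]
    rw [hc]
    exact if_congr (connectedOn_iff S) rfl rfl
  rw [Finset.sum_congr rfl (fun S _ => hstep S)]
  show (∑ S : Finset (ZMod (n+3) × Fin (k+1)), _) = _
  rw [← Equiv.sum_comp (fe.symm : (ZMod (n+3) → Finset (Fin (k+1))) ≃ _)]
  have hW : ∀ f : ZMod (n+3) → Finset (Fin (k+1)),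
      q ^ ((n+3) * (k+1) - (fe.symm f).card) * (1 - q) ^ (fe.symm f).card
        = ∏ a, wt q k (f a) := by
    intro f
    have hcle : ∀ a : ZMod (n+3), (f a).card ≤ k + 1 := by
      intro a
      simpa using Finset.card_le_card (Finset.subset_univ (f a))
    have hsum : ∑ a : ZMod (n+3), (k + 1 - (f a).card) = (n+3) * (k+1) - ∑ a, (f a).card := by
      have h1 : ∑ a : ZMod (n+3), (k + 1 - (f a).card) + ∑ a, (f a).card
          = (n+3) * (k+1) := by
        rw [← Finset.sum_add_distrib]
        have : ∀ a : ZMod (n+3), (k + 1 - (f a).card) + (f a).card = k + 1 := fun a =>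
          Nat.sub_add_cancel (hcle a)
        rw [Finset.sum_congr rfl (fun a _ => this a), Finset.sum_const, Finset.card_univ,
          ZMod.card, smul_eq_mul]
      omega
    unfold wt
    rw [Finset.prod_mul_distrib, Finset.prod_pow_eq_pow_sum, Finset.prod_pow_eq_pow_sum,
      fe_symm_card, hsum]
  have hcond : ∀ f : ZMod (n+3) → Finset (Fin (k+1)),
      ((univ : Finset (ZMod (n+3))).filter (fun a => ∀ j, (a, j) ∉ fe.symm f))
        = emptiesOf n k f := by
    intro f
    apply Finset.filter_congr
    intro a _
    simp only [fe_symm_mem, eq_iff_iff]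
    rw [Finset.eq_empty_iff_forall_notMem]
  have hmain : ∀ f : ZMod (n+3) → Finset (Fin (k+1)),
      (if ((univ : Finset (ZMod (n+3))).filter (fun a => ∀ j, (a, j) ∉ fe.symm f)).card ≤ 1
        then q ^ ((n+3) * (k+1) - (fe.symm f).card) * (1 - q) ^ (fe.symm f).card else 0)
      = (if (emptiesOf n k f).card ≤ 1 then ∏ a, wt q k (f a) else 0) := by
    intro f
    rw [hcond f]
    exact if_congr Iff.rfl (hW f) rfl
  rw [Finset.sum_congr rfl (fun f _ => hmain f)]
  rw [← Finset.sum_filter]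
  have hfilt : (univ : Finset (ZMod (n+3) → Finset (Fin (k+1)))).filter
        (fun f => (emptiesOf n k f).card ≤ 1)
      = (univ : Finset (ZMod (n+3) → Finset (Fin (k+1)))).filter
        (fun f => emptiesOf n k f ∈ (univ : Finset (Finset (ZMod (n+3)))).filter (fun T => T.card ≤ 1)) := by
    apply Finset.filter_congr; intro f _; simp
  rw [hfilt, ← Finset.sum_fiberwise_eq_sum_filter]
  rw [Finset.sum_congr rfl (fun T _ => bundleSum n k q T)]
  have hins : (univ : Finset (Finset (ZMod (n+3)))).filter (fun T => T.card ≤ 1)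
      = insert ∅ ((univ : Finset (Finset (ZMod (n+3)))).filter (fun T => T.card = 1)) := by
    ext T
    simp only [Finset.mem_filter, Finset.mem_univ, true_and, Finset.mem_insert]
    constructor
    · intro h
      rcases Nat.le_one_iff_eq_zero_or_eq_one.mp h with h0 | h1
      · left; exact Finset.card_eq_zero.mp h0
      · right; exact h1
    · rintro (rfl | h)
      · simp
      · omega
  rw [hins, Finset.sum_insert (by simp)]
  have hsing : ∑ T ∈ (univ : Finset (Finset (ZMod (n+3)))).filter (fun T => T.card = 1),
      (q^(k+1))^T.card * (1 - q^(k+1))^((n+3) - T.card)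
      = (n+3 : ℂ) * (q^(k+1) * (1 - q^(k+1))^(n+2)) := by
    have hconst : ∀ T ∈ (univ : Finset (Finset (ZMod (n+3)))).filter (fun T => T.card = 1),
        (q^(k+1))^T.card * (1 - q^(k+1))^((n+3) - T.card) = q^(k+1) * (1-q^(k+1))^(n+2) := by
      intro T hT
      rw [(Finset.mem_filter.mp hT).2, pow_one]
      norm_num
    rw [Finset.sum_congr rfl hconst, Finset.sum_const]
    have hcount : ((univ : Finset (Finset (ZMod (n+3)))).filter (fun T => T.card = 1)).card = n + 3 := by
      have := Finset.card_powersetCard 1 (univ : Finset (ZMod (n+3)))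
      rw [Finset.powersetCard_eq_filter, Finset.powerset_univ] at this
      rw [this]
      simp [ZMod.card, Nat.choose_one_right]
    rw [hcount, nsmul_eq_mul]
    push_cast
    ring
  rw [hsing]
  norm_num
end releval

lemma mem_zeros (k n : ℕ) (q : ℂ) (hq : q^(k+1) = -(1/((n:ℂ)+2))) :
    q ∈ {q : ℂ | ∃ G : Multigraph, G.Connected ∧ (G.rel).eval q = 0} := by
  refine ⟨cyc n k, cyc_connected n k, ?_⟩
  have hne : ((n:ℂ)+2) ≠ 0 := by
    have h2 : ((n:ℂ)+2) = ((n+2 : ℕ) : ℂ) := by push_cast; ring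
    rw [h2]
    exact Nat.cast_ne_zero.mpr (by omega)
  have key : (1 : ℂ) + ((n:ℂ)+2) * (-(1/((n:ℂ)+2))) = 0 := by field_simp; ring
  rw [cyc_rel_eval, hq]
  calc (1 - -(1/((n:ℂ)+2)))^(n+3) + ((n:ℂ)+3) * (-(1/((n:ℂ)+2)) * (1 - -(1/((n:ℂ)+2)))^(n+2))
      = (1 - -(1/((n:ℂ)+2)))^(n+2) * ((1:ℂ) + ((n:ℂ)+2) * (-(1/((n:ℂ)+2)))) := by
        rw [pow_succ]; push_cast; ring
    _ = 0 := by rw [key, mul_zero]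


open Real in
set_option maxHeartbeats 1000000 in
private lemma approx_aux (q0 : ℂ) (h0 : q0 ≠ 0) (h1 : ‖q0‖ < 1) (ε : ℝ) (hε : 0 < ε) :
    ∃ (k n : ℕ) (q : ℂ), q^(k+1) = -(1/((n:ℂ)+2)) ∧ dist q0 q < ε := by
  set t := ‖q0‖ with ht
  have ht0 : 0 < t := norm_pos_iff.mpr h0
  set φ := q0.arg with hφ
  obtain ⟨κ, hκ⟩ := exists_nat_gt (max 4 (9/ε))
  set K : ℕ := κ + 1 with hKdef
  have hK4 : (4:ℝ) < K := by
    have := le_max_left (4:ℝ) (9/ε)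
    rw [hKdef]; push_cast
    linarith
  have hK9 : 9/ε < K := by
    have := le_max_right (4:ℝ) (9/ε)
    rw [hKdef]; push_cast
    linarith
  have hKpos : (0:ℝ) < K := by linarith
  have hKne : (K:ℝ) ≠ 0 := ne_of_gt hKpos
  -- modulus
  set x0 : ℝ := (1/t)^K with hx0def
  have h1t : 1 < 1/t := one_lt_one_div ht0 h1
  have hx0 : 1 < x0 := one_lt_pow₀ h1t (by omega)
  have hx0pos : 0 < x0 := by linarith
  set m' : ℕ := ⌈x0⌉₊ with hm'def
  have hm'2 : 1 < m' := Nat.lt_ceil.mpr (by exact_mod_cast hx0)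
  have hm'pos : (0:ℝ) < m' := by
    have : 0 < m' := by omega
    exact_mod_cast this
  have hm1 : x0 ≤ (m':ℝ) := Nat.le_ceil x0
  have hm2 : (m':ℝ) < x0 + 1 := Nat.ceil_lt_add_one hx0pos.le
  have hm2' : (m':ℝ) ≤ 2 * x0 := by nlinarith
  set e : ℝ := -(1:ℝ)/K with hedef
  have he : e ≤ 0 := by
    rw [hedef]
    apply div_nonpos_of_nonpos_of_nonneg <;> linarith
  set r : ℝ := (m':ℝ) ^ e with hrdef
  have hrpos : 0 < r := Real.rpow_pos_of_pos hm'pos e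
  have hrk : r ^ K = 1/(m':ℝ) := by
    rw [hrdef, ← Real.rpow_natCast ((m':ℝ) ^ e) K, ← Real.rpow_mul hm'pos.le]
    have : e * K = -1 := by rw [hedef]; field_simp
    rw [this, Real.rpow_neg_one, one_div]
  have hx0e : x0 ^ e = t := by
    rw [hx0def, ← Real.rpow_natCast (1/t) K, ← Real.rpow_mul (by positivity)]
    have : (K:ℝ) * e = -1 := by rw [hedef]; field_simp
    rw [this, Real.rpow_neg_one]
    simp
  have hrt : r ≤ t := by
    rw [hrdef, ← hx0e]
    exact Real.rpow_le_rpow_of_nonpos hx0pos hm1 he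
  have hrt2 : t * 2^e ≤ r := by
    have h1' : (2*x0) ^ e ≤ r := Real.rpow_le_rpow_of_nonpos hm'pos hm2' he
    have h2' : (2*x0) ^ e = 2^e * t := by
      rw [Real.mul_rpow (by norm_num) hx0pos.le, hx0e]
    linarith [h1', h2'.symm.le, h2'.le]
  have h2e1 : (2:ℝ)^e ≤ 1 := Real.rpow_le_one_of_one_le_of_nonpos (by norm_num) he
  have h2K : 1 - (2:ℝ)^e ≤ 1/K := by
    have hexp : (2:ℝ)^e = Real.exp (Real.log 2 * e) := Real.rpow_def_of_pos (by norm_num) e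
    have hle := Real.add_one_le_exp (Real.log 2 * e)
    have hlog1 : Real.log 2 ≤ 1 := by
      have := Real.log_le_sub_one_of_pos (by norm_num : (0:ℝ) < 2)
      linarith
    have hlog0 : 0 ≤ Real.log 2 := Real.log_nonneg (by norm_num)
    have he' : Real.log 2 * e = -(Real.log 2 / K) := by rw [hedef]; ring
    rw [he'] at hle
    rw [hexp, he']
    have hd : Real.log 2 / K ≤ 1 / K := by gcongr
    linarith
  have htr : t - r ≤ 1/K := by nlinarith
  -- argument
  set x : ℝ := φ * K / π with hxdef
  have hπ := Real.pi_pos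
  set j : ℤ := ⌊x/2⌋ with hjdef
  set o : ℤ := 2*j+1 with hodef
  have ho1 : (o:ℝ) - x ≤ 1 := by
    have := Int.floor_le (x/2)
    push_cast [hodef]
    linarith
  have ho2 : -1 < (o:ℝ) - x := by
    have := Int.lt_floor_add_one (x/2)
    push_cast [hodef]
    linarith
  set θ : ℝ := (o:ℝ)*π/(K:ℝ) with hθdef
  have hφx : φ = x*π/K := by rw [hxdef]; field_simp
  have hθφ : |θ - φ| ≤ π/K := by
    have heq : θ - φ = ((o:ℝ) - x)*(π/K) := by rw [hθdef, hφx]; ring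
    rw [heq, abs_mul, abs_of_pos (by positivity : (0:ℝ) < π/K)]
    have h1' : |(o:ℝ) - x| ≤ 1 := abs_le.mpr ⟨by linarith, ho1⟩
    exact mul_le_of_le_one_left (by positivity) h1'
  have hπK1 : π/K ≤ 1 := by
    rw [div_le_one hKpos]
    nlinarith [Real.pi_lt_d2]
  -- the zero
  set q : ℂ := (r:ℂ) * Complex.exp ((θ:ℝ) * Complex.I) with hqdef
  set n : ℕ := m' - 2 with hndef
  have hm'n : m' = n + 2 := by omega
  have hcast : ((n:ℂ)+2) = (m':ℂ) := by rw [hm'n]; push_cast; ring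
  have hqK : q ^ K = -(1/((n:ℂ)+2)) := by
    rw [hqdef, mul_pow, ← Complex.ofReal_pow, hrk]
    rw [← Complex.exp_nat_mul]
    have hKθ : (K:ℝ)*θ = o*π := by rw [hθdef]; field_simp
    have harg : (K:ℂ) * ((θ:ℝ) * Complex.I) = (o:ℂ) * ((π:ℝ) * Complex.I) := by
      have : ((K:ℝ)*θ : ℝ) = ((o:ℝ)*π : ℝ) := hKθ
      calc (K:ℂ) * ((θ:ℝ) * Complex.I) = (((K:ℝ)*θ : ℝ) : ℂ) * Complex.I := by push_cast; ring
        _ = (((o:ℝ)*π : ℝ) : ℂ) * Complex.I := by rw [this]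
        _ = (o:ℂ) * ((π:ℝ) * Complex.I) := by push_cast; ring
    rw [harg, Complex.exp_int_mul, Complex.exp_pi_mul_I]
    have hodd : Odd o := ⟨j, by rw [hodef]⟩
    rw [hodd.neg_one_zpow, hcast]
    push_cast
    ring
  refine ⟨κ, n, q, by rw [← hKdef]; exact hqK, ?_⟩
  -- distance estimate
  have hq0eq : ((t:ℝ):ℂ) * Complex.exp ((φ:ℝ) * Complex.I) = q0 := Complex.norm_mul_exp_arg_mul_I q0
  have hsplit : q0 - q = ((t:ℝ):ℂ) * (Complex.exp ((φ:ℝ)*Complex.I) - Complex.exp ((θ:ℝ)*Complex.I))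
      + (((t - r : ℝ)):ℂ) * Complex.exp ((θ:ℝ)*Complex.I) := by
    rw [← hq0eq, hqdef]
    push_cast
    ring
  have habs_exp : ∀ y : ℝ, ‖Complex.exp ((y:ℝ) * Complex.I)‖ = 1 :=
    Complex.norm_exp_ofReal_mul_I
  have hdiff : ‖Complex.exp ((φ:ℝ)*Complex.I) - Complex.exp ((θ:ℝ)*Complex.I)‖
      ≤ 2 * |φ - θ| := by
    have hfac : Complex.exp ((φ:ℝ)*Complex.I) - Complex.exp ((θ:ℝ)*Complex.I)
        = Complex.exp ((θ:ℝ)*Complex.I) * (Complex.exp (((φ - θ : ℝ))*Complex.I) - 1) := by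
      rw [mul_sub, ← Complex.exp_add, mul_one]
      congr 1
      push_cast
      ring
    rw [hfac, norm_mul, habs_exp, one_mul]
    have habsarg : ‖((φ - θ : ℝ))*Complex.I‖ = |φ - θ| := by
      rw [norm_mul, Complex.norm_I, Complex.norm_real, Real.norm_eq_abs, mul_one]
    have hle1 : ‖((φ - θ : ℝ))*Complex.I‖ ≤ 1 := by
      rw [habsarg]
      rw [abs_sub_comm] at hθφ
      linarith
    calc ‖Complex.exp (((φ - θ : ℝ))*Complex.I) - 1‖
        ≤ 2 * ‖((φ - θ : ℝ))*Complex.I‖ := Complex.norm_exp_sub_one_le hle1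
      _ = 2 * |φ - θ| := by rw [habsarg]
  have hdist : dist q0 q ≤ t * (2 * |φ - θ|) + (t - r) := by
    rw [Complex.dist_eq, hsplit]
    calc ‖_‖ ≤ ‖((t:ℝ):ℂ) * (Complex.exp ((φ:ℝ)*Complex.I) - Complex.exp ((θ:ℝ)*Complex.I))‖
          + ‖(((t - r : ℝ)):ℂ) * Complex.exp ((θ:ℝ)*Complex.I)‖ := norm_add_le _ _
      _ ≤ t * (2 * |φ - θ|) + (t - r) := by
        rw [norm_mul, norm_mul, habs_exp, Complex.norm_real, Complex.norm_real, Real.norm_eq_abs,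
          Real.norm_eq_abs, mul_one,
          abs_of_pos ht0, abs_of_nonneg (by linarith : (0:ℝ) ≤ t - r)]
        have := hdiff
        nlinarith [ht0.le]
  have hfinal : t * (2 * |φ - θ|) + (t - r) < ε := by
    have h9 : 9 < ε * K := by
      rw [div_lt_iff₀ hε] at hK9
      linarith [hK9]
    have hb1 : t * (2 * |φ - θ|) ≤ 2 * (π/K) := by
      rw [abs_sub_comm] at hθφ
      nlinarith [abs_nonneg (φ - θ)]
    have hb2 : 2 * (π/K) + 1/K < ε := by
      have h' : (2*π + 1)/K < ε := by
        rw [div_lt_iff₀ hKpos]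
        nlinarith [Real.pi_lt_d2]
      have heq : 2 * (π/K) + 1/K = (2*π+1)/K := by ring
      linarith [heq ▸ h']
    linarith
  linarith [hdist, hfinal]


/-- The closure of the set of complex zeros of reliability polynomials of connected
multigraphs contains the closed unit disc. -/
theorem stmt5 :
    Metric.closedBall (0 : ℂ) 1 ⊆
      closure {q : ℂ | ∃ G : Multigraph, G.Connected ∧ (G.rel).eval q = 0} := by
  have hball : Metric.ball (0:ℂ) 1 ⊆
      closure {q : ℂ | ∃ G : Multigraph, G.Connected ∧ (G.rel).eval q = 0} := by
    intro q0 hq0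
    rw [Metric.mem_ball, Complex.dist_eq, sub_zero] at hq0
    rw [Metric.mem_closure_iff]
    intro ε hε
    by_cases h0 : q0 = 0
    · obtain ⟨m, hm⟩ := exists_nat_gt (1/ε)
      refine ⟨-(1/((m:ℂ)+2)), mem_zeros 0 m _ (by rw [pow_one]), ?_⟩
      have habs : ‖-(1/((m:ℂ)+2))‖ = 1/((m:ℝ)+2) := by
        have hcast : (-(1/((m:ℂ)+2))) = (((-(1/((m:ℝ)+2))):ℝ):ℂ) := by push_cast; ring
        rw [hcast, Complex.norm_real, Real.norm_eq_abs, abs_neg, abs_of_pos (by positivity)]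
      rw [h0, dist_comm, Complex.dist_eq, sub_zero, habs]
      have hm2 : (0:ℝ) < (m:ℝ) + 2 := by positivity
      rw [div_lt_iff₀ hm2]
      rw [div_lt_iff₀ hε] at hm
      nlinarith
    · obtain ⟨k, n, q, hqk, hd⟩ := approx_aux q0 h0 hq0 ε hε
      exact ⟨q, mem_zeros k n q hqk, hd⟩
  intro q0 hq0
  have h1 : q0 ∈ closure (Metric.ball (0:ℂ) 1) := by
    rw [closure_ball (0:ℂ) one_ne_zero]
    exact hq0
  have h2 := closure_mono hball h1
  rwa [closure_closure] at h2
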